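/- Let Q ∈ ℝ^{L_Q×d}, K, V ∈ ℝ^{L_K×d}, let Φ_{KQ}, Φ_V ∈ ℝ^{d×d} be invertible, and let P_Q ∈ ℝ^{L_Q×L_Q}, P_{KV} ∈ ℝ^{L_K×L_K} be permutation matrices. Define Q' = P_Q Q Φ_{KQ}, K' = P_{KV} K Φ_{KQ}^{-T}, V' = P_{KV} V Φ_V. Then Attention(Q', K', V') = P_Q · Attention(Q, K, V) · Φ_V, where Attention(Q,K,V) = softmax(QKᵀ/√d)·V with softmax applied row-wise. -/

import Mathlib

open Matrix

noncomputable def softmax {m n : ℕ} (A : Matrix (Fin m) (Fin n) ℝ) :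
    Matrix (Fin m) (Fin n) ℝ :=
  fun i j => Real.exp (A i j) / ∑ k, Real.exp (A i k)

noncomputable def attention {lq lk d : ℕ} (Q : Matrix (Fin lq) (Fin d) ℝ)
    (K V : Matrix (Fin lk) (Fin d) ℝ) : Matrix (Fin lq) (Fin d) ℝ :=
  softmax ((Real.sqrt d)⁻¹ • (Q * Kᵀ)) * V

def permMatrix {m : ℕ} (σ : Equiv.Perm (Fin m)) : Matrix (Fin m) (Fin m) ℝ :=
  fun i j => if σ i = j then 1 else 0

lemma perm_mul {m n : ℕ} (σ : Equiv.Perm (Fin m)) (M : Matrix (Fin m) (Fin n) ℝ) :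
    permMatrix σ * M = fun i j => M (σ i) j := by
  ext i j
  simp [mul_apply, permMatrix]

lemma mul_permT {m n : ℕ} (M : Matrix (Fin m) (Fin n) ℝ) (σ : Equiv.Perm (Fin n)) :
    M * (permMatrix σ)ᵀ = fun i j => M i (σ j) := by
  ext i j
  simp [mul_apply, permMatrix, transpose_apply]

lemma permT_mul_perm {m : ℕ} (σ : Equiv.Perm (Fin m)) :
    (permMatrix σ)ᵀ * permMatrix σ = 1 := by
  ext i j
  simp only [mul_apply, permMatrix, transpose_apply, one_apply]
  rw [Finset.sum_eq_single (σ⁻¹ i)]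
  · simp [Equiv.apply_eq_iff_eq_symm_apply, eq_comm]
  · intro b _ hb
    have : σ b ≠ i := fun h => hb (by simp [← h])
    simp [this]
  · simp

lemma softmax_perm {m n : ℕ} (σ : Equiv.Perm (Fin m)) (τ : Equiv.Perm (Fin n))
    (A : Matrix (Fin m) (Fin n) ℝ) :
    softmax (permMatrix σ * A * (permMatrix τ)ᵀ) = permMatrix σ * softmax A * (permMatrix τ)ᵀ := by
  have hR : permMatrix σ * softmax A * (permMatrix τ)ᵀ
      = fun i j => softmax A (σ i) (τ j) := by
    rw [perm_mul]; exact mul_permT _ τ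
  rw [show permMatrix σ * A * (permMatrix τ)ᵀ = fun i j => A (σ i) (τ j) by rw [perm_mul]; exact mul_permT _ τ, hR]
  ext i j
  simp only [softmax]
  congr 1
  exact Equiv.sum_comp τ (fun k => Real.exp (A (σ i) k))

theorem scrambled_attention_protocol {lq lk d : ℕ}
    (Q : Matrix (Fin lq) (Fin d) ℝ) (K V : Matrix (Fin lk) (Fin d) ℝ)
    (ΦKQ ΦV : Matrix (Fin d) (Fin d) ℝ) (hKQ : IsUnit ΦKQ) (hV : IsUnit ΦV)
    (σQ : Equiv.Perm (Fin lq)) (σKV : Equiv.Perm (Fin lk)) :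
    attention (permMatrix σQ * Q * ΦKQ)
      (permMatrix σKV * K * ΦKQ⁻¹ᵀ) (permMatrix σKV * V * ΦV)
      = permMatrix σQ * attention Q K V * ΦV := by
  have hdet : IsUnit ΦKQ.det := (Matrix.isUnit_iff_isUnit_det ΦKQ).mp hKQ
  have hinv : ΦKQ * ΦKQ⁻¹ = 1 := Matrix.mul_nonsing_inv ΦKQ hdet
  have hQK : (permMatrix σQ * Q * ΦKQ) * (permMatrix σKV * K * ΦKQ⁻¹ᵀ)ᵀ
      = permMatrix σQ * (Q * Kᵀ) * (permMatrix σKV)ᵀ := by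
    rw [transpose_mul, transpose_mul, transpose_transpose]
    rw [Matrix.mul_assoc (permMatrix σQ * Q), ← Matrix.mul_assoc ΦKQ, hinv, Matrix.one_mul]
    simp only [Matrix.mul_assoc]
  have hsmul : (Real.sqrt d)⁻¹ • (permMatrix σQ * (Q * Kᵀ) * (permMatrix σKV)ᵀ)
      = permMatrix σQ * ((Real.sqrt d)⁻¹ • (Q * Kᵀ)) * (permMatrix σKV)ᵀ := by
    rw [Matrix.mul_smul, Matrix.smul_mul]
  unfold attention
  rw [hQK, hsmul, softmax_perm]
  simp only [Matrix.mul_assoc]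
  rw [← Matrix.mul_assoc (permMatrix σKV)ᵀ (permMatrix σKV), permT_mul_perm, Matrix.one_mul]
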